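/- Let w ≥ 2 be an even integer, μ, μ′ ∈ [0,1], and let X₁, …, X_w be independent random variables taking values in [0,1] such that X₁, …, X_{w/2} each have mean μ and X_{w/2+1}, …, X_w each have mean μ′. Define the detector statistic S = Σ_{ℓ=w/2+1}^{w} X_ℓ − Σ_{ℓ=1}^{w/2} X_ℓ and set δ̃ = |μ′ − μ|. Then for every real b with 0 ≤ b ≤ (w/2)·δ̃, P(|S| > b) ≥ 1 − 2·exp(−((w/2)·δ̃ − b)²/w). -/

import Mathlib

open MeasureTheory ProbabilityTheory

lemma hoeffding_aux (p : ℝ) (hp0 : 0 ≤ p) (hp1 : p ≤ 1) (s : ℝ) :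
    1 - p + p * Real.exp s ≤ Real.exp (p * s + s ^ 2 / 8) := by
  set g : ℝ → ℝ := fun x => 1 - p + p * Real.exp x with hgdef
  have hg : ∀ x, 0 < g x := by
    intro x
    have := Real.exp_pos x
    rcases eq_or_lt_of_le hp0 with h | h
    · simp [hgdef, ← h]
    · have : 0 < p * Real.exp x := mul_pos h (Real.exp_pos x)
      simp only [hgdef]; nlinarith
  set F : ℝ → ℝ := fun x => p * x + x ^ 2 / 8 - Real.log (g x) with hFdef
  set F' : ℝ → ℝ := fun x => p + x / 4 - p * Real.exp x / g x with hF'def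
  have hgd : ∀ x, HasDerivAt g (p * Real.exp x) x := by
    intro x
    exact ((Real.hasDerivAt_exp x).const_mul p).const_add (1 - p)
  have hFd : ∀ x, HasDerivAt F (F' x) x := by
    intro x
    have h1 : HasDerivAt (fun x : ℝ => p * x + x ^ 2 / 8) (p + 2 * x / 8) x := by
      have := ((hasDerivAt_id x).const_mul p).add
        (((hasDerivAt_pow 2 x)).div_const 8)
      exact this.congr_deriv (by norm_num)
    have h2 : HasDerivAt (fun x => Real.log (g x)) (p * Real.exp x / g x) x :=
      (hgd x).log (hg x).ne'
    have := h1.sub h2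
    refine this.congr_deriv ?_
    simp only [hF'def]
    ring
  have hF'd : ∀ x, HasDerivAt F' (1 / 4 - p * (1 - p) * Real.exp x / (g x) ^ 2) x := by
    intro x
    have h1 : HasDerivAt (fun x : ℝ => p + x / 4) (1 / 4) x := by
      simpa using ((hasDerivAt_id x).div_const 4).const_add p
    have h2 : HasDerivAt (fun x => p * Real.exp x / g x)
        ((p * Real.exp x * g x - p * Real.exp x * (p * Real.exp x)) / (g x) ^ 2) x :=
      ((Real.hasDerivAt_exp x).const_mul p).div (hgd x) (hg x).ne'
    refine (h1.sub h2).congr_deriv ?_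
    have hgx := (hg x).ne'
    field_simp
    ring
  have hF'' : ∀ x, 0 ≤ 1 / 4 - p * (1 - p) * Real.exp x / (g x) ^ 2 := by
    intro x
    have hgx : g x = 1 - p + p * Real.exp x := rfl
    rw [sub_nonneg, div_le_iff₀ (pow_pos (hg x) 2), hgx]
    nlinarith [sq_nonneg (1 - p - p * Real.exp x), Real.exp_pos x]
  have hmono : Monotone F' := by
    apply monotone_of_deriv_nonneg (fun x => (hF'd x).differentiableAt)
    intro x
    rw [(hF'd x).deriv]
    exact hF'' x
  have hF'0 : F' 0 = 0 := by
    have hg0 : g 0 = 1 := by simp [hgdef]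
    simp [hF'def, hg0]
  have hF0 : F 0 = 0 := by
    have hg0 : g 0 = 1 := by simp [hgdef]
    simp [hFdef, hg0]
  have hFdiff : Differentiable ℝ F := fun x => (hFd x).differentiableAt
  have key : 0 ≤ F s := by
    rcases le_total 0 s with hx | hx
    · have hmonoF : MonotoneOn F (Set.Ici 0) := by
        apply monotoneOn_of_deriv_nonneg (convex_Ici 0) hFdiff.continuous.continuousOn
          hFdiff.differentiableOn
        intro x hxmem
        rw [interior_Ici] at hxmem
        rw [(hFd x).deriv]
        have := hmono (le_of_lt hxmem)
        rw [hF'0] at this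
        exact this
      have := hmonoF (Set.self_mem_Ici) (Set.mem_Ici.mpr hx) hx
      rwa [hF0] at this
    · have hantiF : AntitoneOn F (Set.Iic 0) := by
        apply antitoneOn_of_deriv_nonpos (convex_Iic 0) hFdiff.continuous.continuousOn
          hFdiff.differentiableOn
        intro x hxmem
        rw [interior_Iic] at hxmem
        rw [(hFd x).deriv]
        have := hmono (le_of_lt hxmem)
        rw [hF'0] at this
        exact this
      have := hantiF (Set.mem_Iic.mpr hx) (Set.self_mem_Iic) hx
      rwa [hF0] at this
  have hlog : Real.log (g s) ≤ p * s + s ^ 2 / 8 := by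
    have : F s = p * s + s ^ 2 / 8 - Real.log (g s) := rfl
    linarith [key, this ▸ key]
  have := (Real.log_le_iff_le_exp (hg s)).mp hlog
  exact this


lemma bdd_integrable {Ω : Type*} [MeasurableSpace Ω] (P : Measure Ω) [IsFiniteMeasure P]
    {f : Ω → ℝ} (hf : Measurable f) {C : ℝ} (h : ∀ᵐ ω ∂P, |f ω| ≤ C) : Integrable f P :=
  (integrable_const C).mono' hf.aestronglyMeasurable (by simpa [Real.norm_eq_abs] using h)

lemma mgf_bound {Ω : Type*} [MeasurableSpace Ω] (P : Measure Ω) [IsProbabilityMeasure P]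
    (Y : Ω → ℝ) (hY : Measurable Y) (hr : ∀ᵐ ω ∂P, Y ω ∈ Set.Icc (0:ℝ) 1)
    (p : ℝ) (hp0 : 0 ≤ p) (hp1 : p ≤ 1) (hmean : ∫ ω, Y ω ∂P = p) (s : ℝ) :
    ∫ ω, Real.exp (s * (Y ω - p)) ∂P ≤ Real.exp (s ^ 2 / 8) := by
  have hYint : Integrable Y P := by
    apply bdd_integrable P hY (C := 1)
    filter_upwards [hr] with ω hω
    rw [abs_le]; exact ⟨by linarith [hω.1], hω.2⟩
  have hint : Integrable (fun ω => Real.exp (s * (Y ω - p))) P := by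
    apply bdd_integrable P (by fun_prop) (C := Real.exp (|s| * (1 + |p|)))
    filter_upwards [hr] with ω hω
    rw [abs_of_pos (Real.exp_pos _)]
    apply Real.exp_le_exp.mpr
    calc s * (Y ω - p) ≤ |s * (Y ω - p)| := le_abs_self _
      _ = |s| * |Y ω - p| := abs_mul _ _
      _ ≤ |s| * (1 + |p|) := by
          apply mul_le_mul_of_nonneg_left _ (abs_nonneg s)
          calc |Y ω - p| ≤ |Y ω| + |p| := abs_sub _ _
            _ ≤ 1 + |p| := by
                have : |Y ω| ≤ 1 := abs_le.mpr ⟨by linarith [hω.1], hω.2⟩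
                linarith
  have hint2 : Integrable (fun ω => Real.exp (-(s * p)) * (1 + Y ω * (Real.exp s - 1))) P := by
    apply Integrable.const_mul
    exact (integrable_const 1).add (hYint.mul_const _)
  have hptwise : ∀ᵐ ω ∂P, Real.exp (s * (Y ω - p))
      ≤ Real.exp (-(s * p)) * (1 + Y ω * (Real.exp s - 1)) := by
    filter_upwards [hr] with ω hω
    have hcvx := convexOn_exp.2 (Set.mem_univ (0:ℝ)) (Set.mem_univ s)
      (by linarith [hω.2] : (0:ℝ) ≤ 1 - Y ω) hω.1 (by ring)
    simp only [smul_eq_mul, mul_zero, zero_add, Real.exp_zero, mul_one] at hcvx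
    have h1 : Real.exp (s * (Y ω - p)) = Real.exp (-(s * p)) * Real.exp (Y ω * s) := by
      rw [← Real.exp_add]; ring_nf
    rw [h1]
    apply mul_le_mul_of_nonneg_left _ (Real.exp_pos _).le
    calc Real.exp (Y ω * s) ≤ 1 - Y ω + Y ω * Real.exp s := hcvx
      _ = 1 + Y ω * (Real.exp s - 1) := by ring
  calc ∫ ω, Real.exp (s * (Y ω - p)) ∂P
      ≤ ∫ ω, Real.exp (-(s * p)) * (1 + Y ω * (Real.exp s - 1)) ∂P :=
        integral_mono_ae hint hint2 hptwise
    _ = Real.exp (-(s * p)) * (1 + p * (Real.exp s - 1)) := by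
        rw [MeasureTheory.integral_const_mul, integral_add (integrable_const 1) (hYint.mul_const _),
          integral_const, MeasureTheory.integral_mul_const, hmean]
        simp
    _ ≤ Real.exp (-(s * p)) * Real.exp (p * s + s ^ 2 / 8) := by
        apply mul_le_mul_of_nonneg_left _ (Real.exp_pos _).le
        have := hoeffding_aux p hp0 hp1 s
        linarith
    _ = Real.exp (s ^ 2 / 8) := by rw [← Real.exp_add]; ring_nf




/-- Detection-probability lower bound for the M-UCB detector statistic with a change in the
middle of the window: if the first half of the window has mean `μ` and the second half has
mean `μ′`, `δ̃ = |μ′ − μ|`, and `0 ≤ b ≤ (w/2)·δ̃`, then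
`P(|S| > b) ≥ 1 − 2·exp(−((w/2)·δ̃ − b)²/w)`. -/
theorem mucb_statistic_detection_lower_bound
    {Ω : Type*} [MeasurableSpace Ω] (P : Measure Ω) [IsProbabilityMeasure P]
    (w : ℕ) (hw : 2 ≤ w) (hweven : Even w)
    (μ μ' : ℝ) (hμ : μ ∈ Set.Icc (0 : ℝ) 1) (hμ' : μ' ∈ Set.Icc (0 : ℝ) 1)
    (X : ℕ → Ω → ℝ)
    (hmeas : ∀ i ∈ Finset.Icc 1 w, Measurable (X i))
    (hrange : ∀ i ∈ Finset.Icc 1 w, ∀ᵐ ω ∂P, X i ω ∈ Set.Icc (0 : ℝ) 1)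
    (hmean1 : ∀ i ∈ Finset.Icc 1 (w / 2), ∫ ω, X i ω ∂P = μ)
    (hmean2 : ∀ i ∈ Finset.Icc (w / 2 + 1) w, ∫ ω, X i ω ∂P = μ')
    (hindep : iIndepFun
      (fun i : {x // x ∈ Finset.Icc 1 w} => X i.1) P)
    (b : ℝ) (hb0 : 0 ≤ b) (hb : b ≤ ((w : ℝ) / 2) * |μ' - μ|) :
    ENNReal.ofReal (1 - 2 * Real.exp (-(((w : ℝ) / 2) * |μ' - μ| - b) ^ 2 / w))
      ≤ P {ω | b < |(∑ ℓ ∈ Finset.Icc (w / 2 + 1) w, X ℓ ω)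
          - ∑ ℓ ∈ Finset.Icc 1 (w / 2), X ℓ ω|} := by
  classical
  set n := w / 2 with hn
  have hdvd : 2 ∣ w := hweven.two_dvd
  have hwn : 2 * n = w := Nat.mul_div_cancel' hdvd
  have hn1 : 1 ≤ n := by omega
  have hnw : n ≤ w := by omega
  have hwpos : (0 : ℝ) < (w : ℝ) := by
    have : 0 < w := by omega
    exact_mod_cast this
  have hnr : ((w : ℝ) / 2) = (n : ℝ) := by
    have : (w : ℝ) = 2 * (n : ℝ) := by exact_mod_cast hwn.symm
    rw [this]; ring
  rw [hnr]
  set δ := |μ' - μ| with hδdef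
  have hδ0 : 0 ≤ δ := abs_nonneg _
  have hδ1 : δ ≤ 1 := by
    rw [hδdef, abs_sub_le_iff]
    constructor <;> [linarith [hμ'.2, hμ.1]; linarith [hμ.2, hμ'.1]]
  rw [hnr] at hb
  set t0 : ℝ := (n : ℝ) * δ - b with ht0def
  have ht00 : 0 ≤ t0 := by rw [ht0def]; linarith
  -- basic objects
  set ε : ℕ → ℝ := fun ℓ => if ℓ ≤ n then -1 else 1 with hεdef
  set mm : ℕ → ℝ := fun ℓ => if ℓ ≤ n then μ else μ' with hmmdef
  set Z : ℕ → Ω → ℝ := fun ℓ ω => ε ℓ * (X ℓ ω - mm ℓ) with hZdef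
  set S : Ω → ℝ := fun ω => ∑ ℓ ∈ Finset.Icc 1 w, Z ℓ ω with hSdef
  set T : Ω → ℝ := fun ω =>
    (∑ ℓ ∈ Finset.Icc (n + 1) w, X ℓ ω) - ∑ ℓ ∈ Finset.Icc 1 n, X ℓ ω with hTdef
  have hmmIcc : ∀ ℓ, mm ℓ ∈ Set.Icc (0:ℝ) 1 := by
    intro ℓ
    by_cases h : ℓ ≤ n <;> simp [hmmdef, h, hμ, hμ']
  have hmeanZ : ∀ ℓ ∈ Finset.Icc 1 w, ∫ ω, X ℓ ω ∂P = mm ℓ := by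
    intro ℓ hℓ
    rw [Finset.mem_Icc] at hℓ
    by_cases h : ℓ ≤ n
    · rw [hmmdef]; simp only [h, if_true]
      exact hmean1 ℓ (Finset.mem_Icc.mpr ⟨hℓ.1, h⟩)
    · rw [hmmdef]; simp only [h, if_false]
      exact hmean2 ℓ (Finset.mem_Icc.mpr ⟨by omega, hℓ.2⟩)
  have hmeasZ : ∀ ℓ ∈ Finset.Icc 1 w, Measurable (Z ℓ) := fun ℓ hℓ =>
    ((hmeas ℓ hℓ).sub measurable_const).const_mul _
  have hmeasS : Measurable S := Finset.measurable_sum _ hmeasZ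
  have hε2 : ∀ ℓ, (ε ℓ) ^ 2 = 1 := by
    intro ℓ; by_cases h : ℓ ≤ n <;> simp [hεdef, h]
  -- per-variable mgf bound
  have hmgfZ : ∀ (u : ℝ), ∀ ℓ ∈ Finset.Icc 1 w, mgf (Z ℓ) P u ≤ Real.exp (u ^ 2 / 8) := by
    intro u ℓ hℓ
    have h1 : mgf (Z ℓ) P u = ∫ ω, Real.exp ((u * ε ℓ) * (X ℓ ω - mm ℓ)) ∂P := by
      rw [mgf]
      congr 1 with ω
      rw [hZdef]
      ring_nf
    rw [h1]
    calc ∫ ω, Real.exp ((u * ε ℓ) * (X ℓ ω - mm ℓ)) ∂P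
        ≤ Real.exp ((u * ε ℓ) ^ 2 / 8) :=
          mgf_bound P (X ℓ) (hmeas ℓ hℓ) (hrange ℓ hℓ) (mm ℓ) (hmmIcc ℓ).1 (hmmIcc ℓ).2
            (hmeanZ ℓ hℓ) (u * ε ℓ)
      _ = Real.exp (u ^ 2 / 8) := by rw [mul_pow, hε2, mul_one]
  -- independence of the Z's
  have hZindep : iIndepFun
      (fun i : {x // x ∈ Finset.Icc 1 w} => Z i.1) P := by
    have := hindep.comp (fun i : {x // x ∈ Finset.Icc 1 w} => fun y : ℝ => ε i.1 * (y - mm i.1))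
      (fun i => (measurable_id.sub_const _).const_mul _)
    exact this
  -- mgf of the sum
  have hSF : (∑ i : {x // x ∈ Finset.Icc 1 w}, fun ω => Z i.1 ω) = S := by
    funext ω
    rw [Finset.sum_apply, hSdef]
    exact Finset.sum_coe_sort (Finset.Icc 1 w) (fun ℓ => Z ℓ ω)
  have hcard : (Finset.univ : Finset {x // x ∈ Finset.Icc 1 w}).card = w := by
    rw [Finset.card_univ, Fintype.card_coe, Nat.card_Icc]
    omega
  have hmgfS : ∀ u : ℝ, mgf S P u ≤ Real.exp ((w : ℝ) * u ^ 2 / 8) := by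
    intro u
    rw [← hSF, hZindep.mgf_sum (fun i => hmeasZ i.1 i.2) Finset.univ]
    calc ∏ i : {x // x ∈ Finset.Icc 1 w}, mgf (Z i.1) P u
        ≤ ∏ _i : {x // x ∈ Finset.Icc 1 w}, Real.exp (u ^ 2 / 8) :=
          Finset.prod_le_prod (fun i _ => mgf_nonneg) (fun i _ => hmgfZ u i.1 i.2)
      _ = Real.exp ((w : ℝ) * u ^ 2 / 8) := by
          rw [Finset.prod_const, hcard, ← Real.exp_nat_mul]
          ring_nf
  -- a.e. boundedness
  have hXae : ∀ᵐ ω ∂P, ∀ i : {x // x ∈ Finset.Icc 1 w}, X i.1 ω ∈ Set.Icc (0:ℝ) 1 :=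
    ae_all_iff.mpr fun i => hrange i.1 i.2
  have hSbdd : ∀ᵐ ω ∂P, |S ω| ≤ (w : ℝ) := by
    filter_upwards [hXae] with ω hω
    rw [hSdef]
    calc |∑ ℓ ∈ Finset.Icc 1 w, Z ℓ ω| ≤ ∑ ℓ ∈ Finset.Icc 1 w, |Z ℓ ω| :=
          Finset.abs_sum_le_sum_abs _ _
      _ ≤ ∑ _ℓ ∈ Finset.Icc 1 w, (1:ℝ) := by
          apply Finset.sum_le_sum
          intro ℓ hℓ
          have hx := hω ⟨ℓ, hℓ⟩
          have hm := hmmIcc ℓ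
          rw [hZdef]
          have : |ε ℓ| = 1 := by
            have := hε2 ℓ
            nlinarith [abs_nonneg (ε ℓ), sq_abs (ε ℓ)]
          rw [abs_mul, this, one_mul, abs_le]
          constructor <;> [linarith [hx.1, hm.2]; linarith [hx.2, hm.1]]
      _ = (w : ℝ) := by
          rw [Finset.sum_const, Nat.card_Icc]
          simp
  have hintexp : ∀ u : ℝ, Integrable (fun ω => Real.exp (u * S ω)) P := by
    intro u
    apply bdd_integrable P ((hmeasS.const_mul u).exp) (C := Real.exp (|u| * w))
    filter_upwards [hSbdd] with ω hω
    rw [abs_of_pos (Real.exp_pos _)]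
    apply Real.exp_le_exp.mpr
    calc u * S ω ≤ |u * S ω| := le_abs_self _
      _ = |u| * |S ω| := abs_mul _ _
      _ ≤ |u| * w := mul_le_mul_of_nonneg_left hω (abs_nonneg u)
  -- Chernoff bounds
  set t : ℝ := 4 * t0 / w with htdef
  have ht : 0 ≤ t := by rw [htdef]; positivity
  have hexpo : Real.exp (-t * t0) * Real.exp ((w:ℝ) * t ^ 2 / 8) ≤ Real.exp (-t0 ^ 2 / w) := by
    rw [← Real.exp_add]
    apply Real.exp_le_exp.mpr
    rw [htdef]
    have h1 : -(4 * t0 / ↑w) * t0 + ↑w * (4 * t0 / ↑w) ^ 2 / 8 = -(2 * t0 ^ 2) / w := by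
      field_simp
      ring
    rw [h1]
    have : 0 ≤ t0 ^ 2 / w := by positivity
    rw [div_le_div_iff₀ hwpos hwpos] at *
    nlinarith [sq_nonneg t0]
  have hup : P {ω | t0 ≤ S ω} ≤ ENNReal.ofReal (Real.exp (-t0 ^ 2 / w)) := by
    rw [← ENNReal.ofReal_toReal (measure_ne_top P _)]
    apply ENNReal.ofReal_le_ofReal
    calc (P {ω | t0 ≤ S ω}).toReal ≤ Real.exp (-t * t0) * mgf S P t :=
        measure_ge_le_exp_mul_mgf t0 ht (hintexp t)
      _ ≤ Real.exp (-t * t0) * Real.exp ((w:ℝ) * t ^ 2 / 8) :=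
        mul_le_mul_of_nonneg_left (hmgfS t) (Real.exp_pos _).le
      _ ≤ Real.exp (-t0 ^ 2 / w) := hexpo
  have hlow : P {ω | S ω ≤ -t0} ≤ ENNReal.ofReal (Real.exp (-t0 ^ 2 / w)) := by
    rw [← ENNReal.ofReal_toReal (measure_ne_top P _)]
    apply ENNReal.ofReal_le_ofReal
    calc (P {ω | S ω ≤ -t0}).toReal ≤ Real.exp (-(-t) * (-t0)) * mgf S P (-t) :=
        measure_le_le_exp_mul_mgf (-t0) (neg_nonpos_of_nonneg ht) (hintexp (-t))
      _ = Real.exp (-t * t0) * mgf S P (-t) := by ring_nf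
      _ ≤ Real.exp (-t * t0) * Real.exp ((w:ℝ) * (-t) ^ 2 / 8) :=
        mul_le_mul_of_nonneg_left (hmgfS (-t)) (Real.exp_pos _).le
      _ = Real.exp (-t * t0) * Real.exp ((w:ℝ) * t ^ 2 / 8) := by ring_nf
      _ ≤ Real.exp (-t0 ^ 2 / w) := hexpo
  -- pointwise identity S = T - n (μ' - μ)
  have hST : ∀ ω, S ω = T ω - (n : ℝ) * (μ' - μ) := by
    intro ω
    have hA : Finset.Icc 1 n = Finset.Ioc 0 n := Finset.Icc_add_one_left_eq_Ioc 0 n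
    have hB : Finset.Icc (n + 1) w = Finset.Ioc n w := Finset.Icc_add_one_left_eq_Ioc n w
    have hC : Finset.Icc 1 w = Finset.Ioc 0 w := Finset.Icc_add_one_left_eq_Ioc 0 w
    have h1 : ∑ ℓ ∈ Finset.Ioc 0 n, Z ℓ ω = (n:ℝ) * μ - ∑ ℓ ∈ Finset.Ioc 0 n, X ℓ ω := by
      have hcong : ∀ ℓ ∈ Finset.Ioc 0 n, Z ℓ ω = μ - X ℓ ω := by
        intro ℓ hℓ
        have h := (Finset.mem_Ioc.mp hℓ).2
        rw [hZdef]; simp only [hεdef, hmmdef, h, if_true]; ring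
      rw [Finset.sum_congr rfl hcong, Finset.sum_sub_distrib, Finset.sum_const, Nat.card_Ioc]
      simp [nsmul_eq_mul]
    have h2 : ∑ ℓ ∈ Finset.Ioc n w, Z ℓ ω
        = (∑ ℓ ∈ Finset.Ioc n w, X ℓ ω) - (n:ℝ) * μ' := by
      have hcong : ∀ ℓ ∈ Finset.Ioc n w, Z ℓ ω = X ℓ ω - μ' := by
        intro ℓ hℓ
        have h := (Finset.mem_Ioc.mp hℓ).1
        have h' : ¬ (ℓ ≤ n) := by omega
        rw [hZdef]; simp only [hεdef, hmmdef, h', if_false]; ring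
      rw [Finset.sum_congr rfl hcong, Finset.sum_sub_distrib, Finset.sum_const, Nat.card_Ioc]
      have hcn : w - n = n := by omega
      rw [hcn]
      simp [nsmul_eq_mul]
    have hsplit : ∑ ℓ ∈ Finset.Ioc 0 n, Z ℓ ω + ∑ ℓ ∈ Finset.Ioc n w, Z ℓ ω
        = ∑ ℓ ∈ Finset.Ioc 0 w, Z ℓ ω :=
      Finset.sum_Ioc_consecutive _ (Nat.zero_le n) hnw
    rw [hSdef, hTdef]
    simp only [hA, hB, hC]
    rw [← hsplit, h1, h2]
    ring
  -- event inclusion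
  have hsub : {ω | |T ω| ≤ b} ⊆ {ω | t0 ≤ S ω} ∪ {ω | S ω ≤ -t0} := by
    intro ω hω
    simp only [Set.mem_setOf_eq] at hω
    have habs : (n:ℝ) * δ - |T ω| ≤ |S ω| := by
      rw [hST ω]
      have h1 : |(n : ℝ) * (μ' - μ)| = (n:ℝ) * δ := by
        rw [abs_mul, hδdef, abs_of_nonneg (by positivity : (0:ℝ) ≤ (n:ℝ))]
      calc (n:ℝ) * δ - |T ω| = |(n : ℝ) * (μ' - μ)| - |T ω| := by rw [h1]
        _ ≤ |T ω - (n : ℝ) * (μ' - μ)| := by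
            have h2 := abs_sub_abs_le_abs_sub ((n:ℝ) * (μ' - μ)) (T ω)
            rw [abs_sub_comm ((n:ℝ) * (μ' - μ)) (T ω)] at h2
            exact h2
    have ht0S : t0 ≤ |S ω| := by rw [ht0def]; linarith
    simp only [Set.mem_union, Set.mem_setOf_eq]
    rcases le_abs.mp ht0S with h | h
    · exact Or.inl h
    · exact Or.inr (by linarith)
  -- measurability of T-event
  have hmeasT : Measurable T := by
    apply Measurable.sub
    · exact Finset.measurable_sum _ (fun ℓ hℓ => hmeas ℓ (by
        rw [Finset.mem_Icc] at *; omega))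
    · exact Finset.measurable_sum _ (fun ℓ hℓ => hmeas ℓ (by
        rw [Finset.mem_Icc] at *; omega))
  have hmeasAc : MeasurableSet {ω | |T ω| ≤ b} :=
    measurableSet_le hmeasT.abs measurable_const
  -- bound on the complement
  have hPAc : P {ω | |T ω| ≤ b} ≤ ENNReal.ofReal (2 * Real.exp (-t0 ^ 2 / w)) := by
    calc P {ω | |T ω| ≤ b} ≤ P ({ω | t0 ≤ S ω} ∪ {ω | S ω ≤ -t0}) := measure_mono hsub
      _ ≤ P {ω | t0 ≤ S ω} + P {ω | S ω ≤ -t0} := measure_union_le _ _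
      _ ≤ ENNReal.ofReal (Real.exp (-t0 ^ 2 / w)) + ENNReal.ofReal (Real.exp (-t0 ^ 2 / w)) :=
          add_le_add hup hlow
      _ = ENNReal.ofReal (2 * Real.exp (-t0 ^ 2 / w)) := by
          rw [← ENNReal.ofReal_add (Real.exp_pos _).le (Real.exp_pos _).le]
          ring_nf
  -- final assembly
  have hgoalset : {ω | b < |(∑ ℓ ∈ Finset.Icc (n + 1) w, X ℓ ω)
      - ∑ ℓ ∈ Finset.Icc 1 n, X ℓ ω|} = {ω | |T ω| ≤ b}ᶜ := by
    ext ω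
    simp only [Set.mem_setOf_eq, Set.mem_compl_iff, not_le, hTdef]
  rw [hgoalset, prob_compl_eq_one_sub hmeasAc]
  calc ENNReal.ofReal (1 - 2 * Real.exp (-((n:ℝ) * δ - b) ^ 2 / w))
      = 1 - ENNReal.ofReal (2 * Real.exp (-((n:ℝ) * δ - b) ^ 2 / w)) := by
        rw [ENNReal.ofReal_sub _ (by positivity), ENNReal.ofReal_one]
    _ = 1 - ENNReal.ofReal (2 * Real.exp (-t0 ^ 2 / w)) := by rw [ht0def]
    _ ≤ 1 - P {ω | |T ω| ≤ b} := tsub_le_tsub_left hPAc _
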